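/- arXiv:1204.2975 — 5 statements merged into one kernel-verified Lean document; each statement's English description precedes it below -/
import Mathlib

section
/- For any type Q of sequences of length N over a finite alphabet X, the size of the type class T_Q^N satisfies (N+1)^{-|X|} · exp(N·H(Q)) ≤ |T_Q^N| ≤ exp(N·H(Q)), where H(Q) is the Shannon entropy of Q (with exp and log to the same base). -/
/-- The empirical distribution (type) of a sequence `x : Fin N → X`. -/
noncomputable def empDist {X : Type*} [Fintype X] [DecidableEq X] {N : ℕ}
    (x : Fin N → X) : X → ℝ :=
  fun a => ((Finset.univ.filter (fun n => x n = a)).card : ℝ) / N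

/-- Shannon entropy of a distribution `Q` on a finite set. -/
noncomputable def shannonEntropy {X : Type*} [Fintype X] (Q : X → ℝ) : ℝ :=
  -∑ a, Q a * Real.log (Q a)

open Finset Nat

section Aux

variable {X : Type*} [Fintype X] [DecidableEq X] {N : ℕ}

/-- Count of occurrences of `a` in `x`. -/
def myCnt (x : Fin N → X) (a : X) : ℕ := (Finset.univ.filter (fun n => x n = a)).card

lemma empDist_apply (x : Fin N → X) (a : X) : empDist x a = (myCnt x a : ℝ) / N := rfl

lemma myCnt_eq_card_subtype (x : Fin N → X) (a : X) :
    myCnt x a = Fintype.card {n // x n = a} := (Fintype.card_subtype _).symm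

lemma sum_myCnt (x : Fin N → X) : ∑ a, myCnt x a = N := by
  have := (Finset.card_eq_sum_card_fiberwise (f := x) (s := univ) (t := univ)
    (fun i _ => mem_univ _)).symm
  simpa [myCnt] using this

lemma myCnt_comp (x : Fin N → X) (σ : Equiv.Perm (Fin N)) (a : X) :
    myCnt (x ∘ σ) a = myCnt x a := by
  rw [myCnt_eq_card_subtype, myCnt_eq_card_subtype]
  exact Fintype.card_congr (Equiv.subtypeEquiv σ (fun n => by simp [Function.comp]))

lemma pow_mul_factorial_le (k d : ℕ) : k ^ d * k ! ≤ (k + d)! := by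
  induction d with
  | zero => simp
  | succ d ih =>
      calc k ^ (d+1) * k ! = k * (k ^ d * k !) := by ring
        _ ≤ k * (k + d)! := Nat.mul_le_mul_left _ ih
        _ ≤ (k + d + 1) * (k + d)! := Nat.mul_le_mul_right _ (by omega)
        _ = (k + (d+1))! := by rw [← Nat.factorial_succ]; ring_nf

lemma factorial_le_pow_mul (m d : ℕ) : (m + d)! ≤ (m + d) ^ d * m ! := by
  induction d with
  | zero => simp
  | succ d ih =>
      calc (m + (d+1))! = (m + d + 1) * (m + d)! := by rw [← Nat.factorial_succ]; ring_nf
        _ ≤ (m + d + 1) * ((m + d) ^ d * m !) := Nat.mul_le_mul_left _ ih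
        _ ≤ (m + (d+1)) * ((m + (d+1)) ^ d * m !) := by
            have h1 : m + d ≤ m + (d+1) := by omega
            exact Nat.mul_le_mul (by omega) (Nat.mul_le_mul_right _ (Nat.pow_le_pow_left h1 d))
        _ = (m + (d+1)) ^ (d+1) * m ! := by ring

lemma key_nat (k m : ℕ) : k ^ m * k ! ≤ k ^ k * m ! := by
  rcases le_total k m with h | h
  · obtain ⟨d, rfl⟩ := Nat.exists_eq_add_of_le h
    calc k ^ (k + d) * k ! = k ^ k * (k ^ d * k !) := by ring
      _ ≤ k ^ k * (k + d)! := Nat.mul_le_mul_left _ (pow_mul_factorial_le k d)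
  · obtain ⟨d, rfl⟩ := Nat.exists_eq_add_of_le h
    calc (m + d) ^ m * (m + d)! ≤ (m + d) ^ m * ((m + d) ^ d * m !) :=
          Nat.mul_le_mul_left _ (factorial_le_pow_mul m d)
      _ = (m + d) ^ (m + d) * m ! := by ring

/-- Cardinality of a type class: `|T| * ∏ (k a)! = N!`. -/
lemma card_typeclass (x₀ : Fin N → X) :
    (univ.filter (fun y : Fin N → X => myCnt y = myCnt x₀)).card * ∏ a, (myCnt x₀ a)! = N ! := by
  have hmaps : ∀ σ : Equiv.Perm (Fin N), σ ∈ univ →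
      (fun σ : Equiv.Perm (Fin N) => x₀ ∘ σ) σ ∈ univ.filter (fun y => myCnt y = myCnt x₀) := by
    intro σ _
    simp only [mem_filter, mem_univ, true_and]
    exact funext (fun a => myCnt_comp x₀ σ a)
  have hN : (N)! = Fintype.card (Equiv.Perm (Fin N)) := by
    rw [Fintype.card_perm, Fintype.card_fin]
  rw [hN, ← Finset.card_univ,
    Finset.card_eq_sum_card_fiberwise hmaps]
  rw [Finset.sum_congr rfl (fun y hy => ?_), Finset.sum_const, smul_eq_mul]
  simp only [mem_filter, mem_univ, true_and] at hy
  have e : ∀ a, {n // y n = a} ≃ {n // x₀ n = a} := fun a =>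
    Fintype.equivOfCardEq (by
      rw [← myCnt_eq_card_subtype, ← myCnt_eq_card_subtype, hy])
  set τ : Equiv.Perm (Fin N) := Equiv.ofFiberEquiv e with hτ
  have hτy : x₀ ∘ τ = y := funext (fun n => Equiv.ofFiberEquiv_map e n)
  have hcard : (univ.filter (fun σ : Equiv.Perm (Fin N) => x₀ ∘ σ = y)).card
      = Fintype.card {g : Equiv.Perm (Fin N) // x₀ ∘ g = x₀} := by
    rw [← Fintype.card_subtype]
    refine Fintype.card_congr (Equiv.mk
      (fun σ => ⟨τ.symm.trans σ.1, ?_⟩) (fun g => ⟨τ.trans g.1, ?_⟩) ?_ ?_)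
    · funext n
      have h1 : x₀ (σ.1 (τ.symm n)) = y (τ.symm n) := congrFun σ.2 (τ.symm n)
      have h2 : x₀ (τ (τ.symm n)) = y (τ.symm n) := congrFun hτy (τ.symm n)
      simpa [Equiv.trans] using h1.trans (h2.symm.trans (by rw [Equiv.apply_symm_apply]))
    · funext n
      have h1 : x₀ (g.1 (τ n)) = x₀ (τ n) := congrFun g.2 (τ n)
      have h2 : x₀ (τ n) = y n := congrFun hτy n
      simpa [Equiv.trans] using h1.trans h2
    · intro σ; ext n; simp
    · intro g; ext n; simp
  rw [hcard, DomMulAct.stabilizer_card]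
  exact Finset.prod_congr rfl (fun a _ => by rw [myCnt_eq_card_subtype])

lemma prod_eq_prod_pow_myCnt (Q : X → ℝ) (y : Fin N → X) :
    ∏ i, Q (y i) = ∏ a, Q a ^ myCnt y a := by
  rw [← Finset.prod_fiberwise_of_maps_to (g := y) (t := univ)
    (fun i _ => mem_univ _) (fun i => Q (y i))]
  refine Finset.prod_congr rfl (fun a _ => ?_)
  rw [Finset.prod_congr rfl (fun i hi => by rw [(mem_filter.mp hi).2]),
    Finset.prod_const]
  rfl

lemma empDist_eq_iff (hN : 0 < N) (x y : Fin N → X) :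
    empDist x = empDist y ↔ myCnt x = myCnt y := by
  constructor
  · intro h
    funext a
    have := congrFun h a
    rw [empDist_apply, empDist_apply, div_eq_div_iff (by positivity) (by positivity)] at this
    exact_mod_cast mul_right_cancel₀ (by positivity : (N : ℝ) ≠ 0) this
  · intro h
    funext a
    rw [empDist_apply, empDist_apply, h]

end Aux

/-- Bounds on the size of a type class:
`(N+1)^{-|X|} exp(N H(Q)) ≤ |T_Q^N| ≤ exp(N H(Q))`. -/
theorem type_class_size (X : Type*) [Fintype X] [DecidableEq X] (N : ℕ) (hN : 0 < N)
    (Q : X → ℝ) (hQ : ∃ x : Fin N → X, empDist x = Q) :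
    (((N : ℝ) + 1) ^ Fintype.card X)⁻¹ * Real.exp (N * shannonEntropy Q)
        ≤ (Nat.card {x : Fin N → X // empDist x = Q} : ℝ) ∧
      (Nat.card {x : Fin N → X // empDist x = Q} : ℝ) ≤ Real.exp (N * shannonEntropy Q) := by
  obtain ⟨x₀, rfl⟩ := hQ
  set Q := empDist x₀ with hQdef
  set k := myCnt x₀ with hk
  have hNR : (0 : ℝ) < N := by exact_mod_cast hN
  -- basic facts about Q
  have hQ_apply : ∀ a, Q a = (k a : ℝ) / N := fun a => rfl
  have hQ_nonneg : ∀ a, 0 ≤ Q a := fun a => by rw [hQ_apply]; positivity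
  have hsumQ : ∑ a, Q a = 1 := by
    rw [Finset.sum_congr rfl (fun a _ => hQ_apply a), ← Finset.sum_div]
    rw [show ∑ a, (k a : ℝ) = ((∑ a, k a : ℕ) : ℝ) by push_cast; rfl, sum_myCnt]
    exact div_self (ne_of_gt hNR)
  have hQ_pos_of_cnt : ∀ a, k a ≠ 0 → 0 < Q a := by
    intro a ha
    rw [hQ_apply]
    have : (0:ℝ) < k a := by exact_mod_cast Nat.pos_of_ne_zero ha
    positivity
  -- the weight function
  set w : (Fin N → X) → ℝ := fun y => ∏ i, Q (y i) with hw
  have hw_nonneg : ∀ y, 0 ≤ w y := fun y => Finset.prod_nonneg (fun i _ => hQ_nonneg _)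
  have hw_eq : ∀ y : Fin N → X, w y = ∏ a, Q a ^ myCnt y a :=
    fun y => prod_eq_prod_pow_myCnt Q y
  have hsum_w : ∑ y : Fin N → X, w y = 1 := by
    have := Finset.prod_univ_sum (fun _ : Fin N => (univ : Finset X)) (fun _ a => Q a)
    rw [Fintype.piFinset_univ] at this
    rw [hw, ← this]
    simp [hsumQ]
  -- p = ∏ Q a ^ k a = exp(-(N * H(Q)))
  set p : ℝ := ∏ a, Q a ^ k a with hp
  have hp_exp : p = Real.exp (-((N : ℝ) * shannonEntropy Q)) := by
    have hterm : ∀ a : X, Q a ^ k a = Real.exp ((k a : ℝ) * Real.log (Q a)) := by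
      intro a
      rcases eq_or_ne (k a) 0 with h | h
      · simp [h]
      · rw [Real.exp_nat_mul, Real.exp_log (hQ_pos_of_cnt a h)]
    rw [hp, Finset.prod_congr rfl (fun a _ => hterm a), ← Real.exp_sum]
    congr 1
    rw [shannonEntropy, mul_neg, neg_neg, Finset.mul_sum]
    refine Finset.sum_congr rfl (fun a _ => ?_)
    rw [← mul_assoc]
    congr 1
    rw [hQ_apply]
    field_simp
  have hp_pos : 0 < p := by rw [hp_exp]; exact Real.exp_pos _
  -- the type class as a finset
  set T : Finset (Fin N → X) := univ.filter (fun y => myCnt y = k) with hT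
  have hcardT : (Nat.card {x : Fin N → X // empDist x = Q} : ℝ) = (T.card : ℝ) := by
    congr 1
    rw [Nat.card_eq_fintype_card, Fintype.card_subtype]
    congr 1
    exact Finset.filter_congr (fun y _ => by rw [hQdef, empDist_eq_iff hN])
  -- sum over a type class
  have hclass_sum : ∀ v : X → ℕ,
      ∑ y ∈ univ.filter (fun y : Fin N → X => myCnt y = v), w y
        = ((univ.filter (fun y : Fin N → X => myCnt y = v)).card : ℝ) * ∏ a, Q a ^ v a := by
    intro v
    rw [Finset.sum_congr rfl (fun y hy => by
      rw [hw_eq y, (mem_filter.mp hy).2]), Finset.sum_const, nsmul_eq_mul]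
  have hT_sum : ∑ y ∈ T, w y = (T.card : ℝ) * p := hclass_sum k
  -- upper bound : T.card * p ≤ 1
  have hupper : (T.card : ℝ) * p ≤ 1 := by
    rw [← hT_sum, ← hsum_w]
    exact Finset.sum_le_sum_of_subset_of_nonneg (Finset.subset_univ T)
      (fun y _ _ => hw_nonneg y)
  -- comparison: any class sum is at most the sum over T
  have hcompare : ∀ x₁ : Fin N → X,
      ∑ y ∈ univ.filter (fun y : Fin N → X => myCnt y = myCnt x₁), w y ≤ (T.card : ℝ) * p := by
    intro x₁
    set m := myCnt x₁ with hm
    set A := (univ.filter (fun y : Fin N → X => myCnt y = m)).card with hA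
    have hAfact : A * ∏ a, (m a)! = N ! := card_typeclass x₁
    have hBfact : T.card * ∏ a, (k a)! = N ! := card_typeclass x₀
    -- nat inequality
    have hnat : A * ∏ a, k a ^ m a ≤ T.card * ∏ a, k a ^ k a := by
      have hpos : 0 < (∏ a, (m a)!) * ∏ a, (k a)! := by positivity
      refine Nat.le_of_mul_le_mul_right ?_ hpos
      calc A * (∏ a, k a ^ m a) * ((∏ a, (m a)!) * ∏ a, (k a)!)
          = (A * ∏ a, (m a)!) * ((∏ a, k a ^ m a) * ∏ a, (k a)!) := by ring
        _ = N ! * ∏ a, (k a ^ m a * (k a)!) := by rw [hAfact, ← Finset.prod_mul_distrib]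
        _ ≤ N ! * ∏ a, (k a ^ k a * (m a)!) := by
            exact Nat.mul_le_mul_left _ (Finset.prod_le_prod' (fun a _ => key_nat (k a) (m a)))
        _ = (T.card * ∏ a, (k a)!) * ((∏ a, k a ^ k a) * ∏ a, (m a)!) := by
            rw [hBfact, ← Finset.prod_mul_distrib]
        _ = T.card * (∏ a, k a ^ k a) * ((∏ a, (m a)!) * ∏ a, (k a)!) := by ring
    -- transfer to ℝ
    have hprod_eq : ∀ v : X → ℕ, (∑ a, v a = N) →
        ∏ a, Q a ^ v a = (∏ a, (k a : ℝ) ^ v a) / (N : ℝ) ^ N := by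
      intro v hv
      rw [Finset.prod_congr rfl (fun a _ => by rw [hQ_apply a, div_pow]),
        Finset.prod_div_distrib]
      congr 1
      rw [Finset.prod_pow_eq_pow_sum, hv]
    rw [hclass_sum m, hp, hprod_eq m (sum_myCnt x₁), hprod_eq k (sum_myCnt x₀)]
    rw [mul_div_assoc', mul_div_assoc', div_le_div_iff_of_pos_right (by positivity)]
    have := hnat
    calc (A : ℝ) * ∏ a, (k a : ℝ) ^ m a = ((A * ∏ a, k a ^ m a : ℕ) : ℝ) := by push_cast; ring
      _ ≤ ((T.card * ∏ a, k a ^ k a : ℕ) : ℝ) := by exact_mod_cast Nat.cast_le.mpr hnat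
      _ = (T.card : ℝ) * ∏ a, (k a : ℝ) ^ k a := by push_cast; ring
  -- lower bound: 1 ≤ (N+1)^|X| * (T.card * p)
  have hlower : 1 ≤ ((N : ℝ) + 1) ^ Fintype.card X * ((T.card : ℝ) * p) := by
    set t : Finset (X → ℕ) := Fintype.piFinset (fun _ : X => Finset.range (N + 1)) with ht
    have hmapsto : ∀ y : Fin N → X, y ∈ (univ : Finset (Fin N → X)) → myCnt y ∈ t := by
      intro y _
      rw [ht, Fintype.mem_piFinset]
      intro a
      rw [Finset.mem_range]
      have : myCnt y a ≤ N := by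
        have := Finset.card_filter_le (univ : Finset (Fin N)) (fun n => y n = a)
        simpa [myCnt] using this
      omega
    have hgroup : ∑ v ∈ t, ∑ y ∈ univ.filter (fun y : Fin N → X => myCnt y = v), w y
        = ∑ y : Fin N → X, w y := Finset.sum_fiberwise_of_maps_to hmapsto w
    have hcard_t : (t.card : ℝ) = ((N : ℝ) + 1) ^ Fintype.card X := by
      rw [ht, Fintype.card_piFinset]
      push_cast
      simp [Finset.card_range, Finset.prod_const]
    have hbound : ∀ v ∈ t, ∑ y ∈ univ.filter (fun y : Fin N → X => myCnt y = v), w y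
        ≤ (T.card : ℝ) * p := by
      intro v _
      rcases Finset.eq_empty_or_nonempty (univ.filter (fun y : Fin N → X => myCnt y = v)) with
        h | ⟨x₁, hx₁⟩
      · rw [h, Finset.sum_empty]
        positivity
      · have hx : myCnt x₁ = v := (mem_filter.mp hx₁).2
        rw [← hx]
        exact hcompare x₁
    calc (1:ℝ) = ∑ y : Fin N → X, w y := hsum_w.symm
      _ = ∑ v ∈ t, ∑ y ∈ univ.filter (fun y : Fin N → X => myCnt y = v), w y := hgroup.symm
      _ ≤ ∑ _v ∈ t, (T.card : ℝ) * p := Finset.sum_le_sum hbound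
      _ = (t.card : ℝ) * ((T.card : ℝ) * p) := by rw [Finset.sum_const, nsmul_eq_mul]
      _ = ((N : ℝ) + 1) ^ Fintype.card X * ((T.card : ℝ) * p) := by rw [hcard_t]
  -- finish
  rw [hcardT]
  have hexp_pos : (0:ℝ) < Real.exp ((N : ℝ) * shannonEntropy Q) := Real.exp_pos _
  have hpe : p * Real.exp ((N : ℝ) * shannonEntropy Q) = 1 := by
    rw [hp_exp, ← Real.exp_add, neg_add_cancel, Real.exp_zero]
  constructor
  · -- lower bound
    have hC : (0:ℝ) < ((N : ℝ) + 1) ^ Fintype.card X := by positivity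
    rw [inv_mul_le_iff₀ hC]
    calc Real.exp ((N:ℝ) * shannonEntropy Q)
        = 1 * Real.exp ((N:ℝ) * shannonEntropy Q) := (one_mul _).symm
      _ ≤ (((N : ℝ) + 1) ^ Fintype.card X * ((T.card : ℝ) * p))
            * Real.exp ((N:ℝ) * shannonEntropy Q) := by
          exact mul_le_mul_of_nonneg_right hlower (le_of_lt hexp_pos)
      _ = ((N : ℝ) + 1) ^ Fintype.card X * (T.card : ℝ)
            * (p * Real.exp ((N:ℝ) * shannonEntropy Q)) := by ring
      _ = ((N : ℝ) + 1) ^ Fintype.card X * (T.card : ℝ) := by rw [hpe, mul_one]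
  · -- upper bound
    calc (T.card : ℝ) = (T.card : ℝ) * p * Real.exp ((N:ℝ) * shannonEntropy Q) := by
          rw [mul_assoc, hpe, mul_one]
      _ ≤ 1 * Real.exp ((N:ℝ) * shannonEntropy Q) :=
          mul_le_mul_of_nonneg_right hupper (le_of_lt hexp_pos)
      _ = Real.exp ((N:ℝ) * shannonEntropy Q) := one_mul _
end

section
/- For any type Q of length-N sequences over a finite alphabet X and any probability distribution G on X with full support, the i.i.d. probability of the type class satisfies G^N(T_Q^N) ≤ exp(-N·D(Q‖G)). -/
/-- Kullback–Leibler divergence of `Q` from `G` on a finite set. -/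
noncomputable def dKL {X : Type*} [Fintype X] (Q G : X → ℝ) : ℝ :=
  ∑ a, Q a * Real.log (Q a / G a)

/-- `G` is a probability distribution on a finite set. -/
def IsProb {X : Type*} [Fintype X] (G : X → ℝ) : Prop :=
  (∀ a, 0 ≤ G a) ∧ ∑ a, G a = 1

/-- Upper bound for the i.i.d. probability of a type class:
`G^N(T_Q^N) ≤ exp(-N D(Q‖G))`. -/
theorem prob_type_class_upper (X : Type*) [Fintype X] [DecidableEq X] (N : ℕ) (hN : 0 < N)
    (G : X → ℝ) (hG : IsProb G) (hGpos : ∀ a, 0 < G a)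
    (Q : X → ℝ) (hQ : ∃ x : Fin N → X, empDist x = Q) :
    ∑ x ∈ Finset.univ.filter (fun x : Fin N → X => empDist x = Q), ∏ n, G (x n)
      ≤ Real.exp (-(N * dKL Q G)) := by
  obtain ⟨x0, hx0⟩ := hQ
  set k : X → ℕ := fun a => (Finset.univ.filter (fun n => x0 n = a)).card with hk
  have hNne : (N : ℝ) ≠ 0 := Nat.cast_ne_zero.mpr hN.ne'
  have hQa : ∀ a, Q a = (k a : ℝ) / N := by
    intro a; rw [← hx0]; rfl
  have hQnn : ∀ a, 0 ≤ Q a := by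
    intro a; rw [hQa]; positivity
  have hQpos : ∀ a, k a ≠ 0 → 0 < Q a := by
    intro a ha; rw [hQa]
    have : (0:ℝ) < (k a : ℝ) := by exact_mod_cast Nat.pos_of_ne_zero ha
    positivity
  have hQzero : ∀ a, k a = 0 → Q a = 0 := by
    intro a ha; rw [hQa, ha]; simp
  have hsumk : ∑ a, k a = N := by
    have := Finset.card_eq_sum_card_fiberwise
      (f := x0) (s := Finset.univ) (t := Finset.univ) (fun x _ => Finset.mem_univ _)
    simpa using this.symm
  have hsumQ : ∑ a, Q a = 1 := by
    have : ∑ a, Q a = (∑ a, (k a : ℝ)) / N := by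
      rw [Finset.sum_div]; exact Finset.sum_congr rfl fun a _ => hQa a
    rw [this]
    rw [← Nat.cast_sum, hsumk]
    field_simp
  -- for any f and x in the type class, ∏ f(x n) = ∏ f a ^ k a
  have hprodgen : ∀ (f : X → ℝ) (x : Fin N → X), empDist x = Q →
      ∏ n, f (x n) = ∏ a, f a ^ k a := by
    intro f x hx
    have hcard : ∀ a, (Finset.univ.filter (fun n => x n = a)).card = k a := by
      intro a
      have h1 : ((Finset.univ.filter (fun n => x n = a)).card : ℝ) / N = (k a : ℝ) / N := by
        rw [← hQa a, ← hx]; rfl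
      field_simp at h1
      exact_mod_cast h1
    calc ∏ n, f (x n) = ∏ a, ∏ n ∈ Finset.univ.filter (fun n => x n = a), f (x n) :=
          (Finset.prod_fiberwise_of_maps_to (fun n _ => Finset.mem_univ (x n)) _).symm
      _ = ∏ a, f a ^ k a := by
          refine Finset.prod_congr rfl fun a _ => ?_
          rw [← hcard a, Finset.prod_congr rfl (fun n hn => ?_), Finset.prod_const]
          rw [(Finset.mem_filter.mp hn).2]
  set T := Finset.univ.filter (fun x : Fin N → X => empDist x = Q) with hT
  have hsumG : ∑ x ∈ T, ∏ n, G (x n) = (T.card : ℝ) * ∏ a, G a ^ k a := by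
    rw [Finset.sum_congr rfl (fun x hx => hprodgen G x (Finset.mem_filter.mp hx).2),
      Finset.sum_const, nsmul_eq_mul]
  -- key counting bound
  have hcount : (T.card : ℝ) * ∏ a, Q a ^ k a ≤ 1 := by
    have h1 : ∑ x ∈ T, ∏ n, Q (x n) = (T.card : ℝ) * ∏ a, Q a ^ k a := by
      rw [Finset.sum_congr rfl (fun x hx => hprodgen Q x (Finset.mem_filter.mp hx).2),
        Finset.sum_const, nsmul_eq_mul]
    have h2 : ∑ x ∈ T, ∏ n, Q (x n) ≤ ∑ x : Fin N → X, ∏ n, Q (x n) := by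
      refine Finset.sum_le_sum_of_subset_of_nonneg (Finset.filter_subset _ _) ?_
      intro x _ _
      exact Finset.prod_nonneg fun n _ => hQnn _
    have h3 : ∑ x : Fin N → X, ∏ n, Q (x n) = 1 := by
      have := Finset.prod_univ_sum (fun _ : Fin N => (Finset.univ : Finset X))
        (fun _ j => Q j)
      rw [Fintype.piFinset_univ] at this
      rw [← this]
      simp [hsumQ]
    rw [← h1]; rw [← h3]; exact h2
  -- exp formula
  have hexp : Real.exp (-(N * dKL Q G)) = ∏ a, (G a / Q a) ^ k a := by
    have : -(↑N * dKL Q G) = ∑ a, (k a : ℝ) * Real.log (G a / Q a) := by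
      rw [dKL, Finset.mul_sum, ← Finset.sum_neg_distrib]
      refine Finset.sum_congr rfl fun a _ => ?_
      by_cases ha : k a = 0
      · simp [ha, hQzero a ha]
      · have hQp := hQpos a ha
        rw [hQa a]
        rw [Real.log_div (ne_of_gt (hGpos a)) (ne_of_gt (by rw [← hQa a]; exact hQp) )]
        rw [Real.log_div (ne_of_gt (by rw [← hQa a]; exact hQp)) (ne_of_gt (hGpos a))]
        field_simp
        ring
    rw [this, Real.exp_sum]
    refine Finset.prod_congr rfl fun a _ => ?_
    by_cases ha : k a = 0
    · simp [ha]
    · have hQp := hQpos a ha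
      have hpos : 0 < G a / Q a := div_pos (hGpos a) hQp
      rw [mul_comm, Real.exp_mul, Real.exp_log hpos]
      norm_num
  -- factor
  have hfac : ∏ a, G a ^ k a = (∏ a, Q a ^ k a) * ∏ a, (G a / Q a) ^ k a := by
    rw [← Finset.prod_mul_distrib]
    refine Finset.prod_congr rfl fun a _ => ?_
    by_cases ha : k a = 0
    · simp [ha]
    · have hQp := hQpos a ha
      rw [← mul_pow, mul_div_cancel₀ _ (ne_of_gt hQp)]
  rw [hsumG, hexp, hfac, ← mul_assoc]
  have hexpos : 0 ≤ ∏ a, (G a / Q a) ^ k a :=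
    Finset.prod_nonneg fun a _ => pow_nonneg (div_nonneg (hGpos a).le (hQnn a)) _
  calc ((T.card : ℝ) * ∏ a, Q a ^ k a) * ∏ a, (G a / Q a) ^ k a
      ≤ 1 * ∏ a, (G a / Q a) ^ k a := mul_le_mul_of_nonneg_right hcount hexpos
    _ = ∏ a, (G a / Q a) ^ k a := one_mul _
end

section
/- For any type Q of length-N sequences over a finite alphabet X and any probability distribution G on X with full support, G^N(T_Q^N) ≥ (N+1)^{-|X|} · exp(-N·D(Q‖G)). -/
open Finset Nat
set_option linter.unusedSectionVars false

section
variable {X : Type*} [Fintype X] [DecidableEq X] {N : ℕ}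

def cnt (x : Fin N → X) (a : X) : ℕ := (Finset.univ.filter fun n => x n = a).card

lemma sum_cnt (x : Fin N → X) : ∑ a, cnt x a = N := by
  have h := Finset.card_eq_sum_card_fiberwise (f := x) (s := Finset.univ)
    (t := Finset.univ) (fun n _ => mem_univ _)
  calc ∑ a, cnt x a = (Finset.univ : Finset (Fin N)).card := h.symm
    _ = N := Finset.card_fin N

lemma cnt_le (x : Fin N → X) (a : X) : cnt x a ≤ N := by
  calc cnt x a ≤ (Finset.univ : Finset (Fin N)).card := Finset.card_filter_le _ _
  _ = N := Finset.card_fin N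

lemma prod_cnt (x : Fin N → X) (f : X → ℝ) : ∏ n, f (x n) = ∏ a, f a ^ cnt x a := by
  rw [← Finset.prod_fiberwise_of_maps_to (g := x) (fun n _ => mem_univ _) (fun n => f (x n))]
  refine Finset.prod_congr rfl fun a _ => ?_
  rw [Finset.prod_congr rfl (fun n hn => by rw [(Finset.mem_filter.mp hn).2]),
    Finset.prod_const, cnt]

lemma cnt_comp_perm (x : Fin N → X) (σ : Equiv.Perm (Fin N)) : cnt (x ∘ σ) = cnt x := by
  funext a
  refine Finset.card_bij' (fun n _ => σ n) (fun m _ => σ.symm m) ?_ ?_ ?_ ?_ <;>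
    simp_all [cnt, Function.comp]

lemma card_fiber_subtype (x0 : Fin N → X) (a : X) :
    Fintype.card {n : Fin N // x0 n = a} = cnt x0 a := by
  simp [cnt, Fintype.card_subtype]

lemma card_stab (x0 : Fin N → X) :
    Fintype.card {σ : Equiv.Perm (Fin N) // x0 ∘ σ = x0}
      = Fintype.card (∀ a : X, Equiv.Perm {n : Fin N // x0 n = a}) := by
  refine (Fintype.card_of_bijective (f := fun (f : ∀ a : X, Equiv.Perm {n : Fin N // x0 n = a}) =>
    (⟨Equiv.ofFiberEquiv (f := x0) (g := x0) f,
      funext fun n => Equiv.ofFiberEquiv_map f n⟩ :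
      {σ : Equiv.Perm (Fin N) // x0 ∘ σ = x0})) ⟨?_, ?_⟩).symm
  · intro f f' h
    have h2 : ∀ n : Fin N, ((f (x0 n)) ⟨n, rfl⟩ : {m // x0 m = x0 n}).val
        = ((f' (x0 n)) ⟨n, rfl⟩ : {m // x0 m = x0 n}).val := by
      intro n
      have := congrArg (fun σ : {σ : Equiv.Perm (Fin N) // x0 ∘ σ = x0} => σ.val n) h
      simp [Equiv.ofFiberEquiv] at this
      exact this
    funext a
    ext ⟨n, hn⟩
    subst hn
    exact congrArg Fin.val (h2 n)
  · rintro ⟨σ, hσ⟩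
    have hiff : ∀ a : X, ∀ n : Fin N, x0 n = a ↔ x0 (σ n) = a := by
      intro a n; rw [show x0 (σ n) = x0 n from congrFun hσ n]
    refine ⟨fun a => (σ.subtypePerm (fun n => (hiff a n).symm)), ?_⟩
    ext n
    simp [Equiv.ofFiberEquiv]

lemma card_perm_fiber (x0 x : Fin N → X) (hx : cnt x = cnt x0) :
    (Finset.univ.filter fun σ : Equiv.Perm (Fin N) => x0 ∘ σ = x).card
      = ∏ a, (cnt x0 a)! := by
  have e : ∀ a : X, {n : Fin N // x n = a} ≃ {n : Fin N // x0 n = a} := fun a =>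
    Fintype.equivOfCardEq (by rw [card_fiber_subtype, card_fiber_subtype, hx])
  set τ : Equiv.Perm (Fin N) := Equiv.ofFiberEquiv (f := x) (g := x0) e with hτdef
  have hτ : ∀ n, x0 (τ n) = x n := fun n => Equiv.ofFiberEquiv_map e n
  have hcard : (Finset.univ.filter fun σ : Equiv.Perm (Fin N) => x0 ∘ σ = x).card
      = (Finset.univ.filter fun σ : Equiv.Perm (Fin N) => x0 ∘ σ = x0).card := by
    refine Finset.card_bij' (fun σ _ => σ * τ⁻¹) (fun ρ _ => ρ * τ) ?_ ?_ ?_ ?_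
    · intro σ hσ
      simp only [Finset.mem_filter, Finset.mem_univ, true_and] at hσ ⊢
      funext n
      have := congrFun hσ (τ⁻¹ n)
      simp only [Function.comp, Equiv.Perm.mul_apply] at this ⊢
      rw [this, ← hτ (τ⁻¹ n)]
      simp
    · intro ρ hρ
      simp only [Finset.mem_filter, Finset.mem_univ, true_and] at hρ ⊢
      funext n
      have := congrFun hρ (τ n)
      simp only [Function.comp, Equiv.Perm.mul_apply] at this ⊢
      rw [this, hτ]
    · intro σ _; group
    · intro ρ _; group
  rw [hcard]
  have h1 : (Finset.univ.filter fun σ : Equiv.Perm (Fin N) => x0 ∘ σ = x0).card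
      = Fintype.card {σ : Equiv.Perm (Fin N) // x0 ∘ σ = x0} :=
    (Fintype.card_subtype _).symm
  rw [h1, card_stab, Fintype.card_pi]
  exact Finset.prod_congr rfl fun a _ => by rw [Fintype.card_perm, card_fiber_subtype]

lemma card_typeClass (x0 : Fin N → X) :
    (Finset.univ.filter fun x : Fin N → X => cnt x = cnt x0).card * ∏ a, (cnt x0 a)!
      = N ! := by
  have h0 : (N)! = (Finset.univ : Finset (Equiv.Perm (Fin N))).card := by
    rw [Finset.card_univ, Fintype.card_perm, Fintype.card_fin]
  rw [h0, Finset.card_eq_sum_card_fiberwise (f := fun σ : Equiv.Perm (Fin N) => x0 ∘ σ)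
    (t := Finset.univ.filter fun x : Fin N → X => cnt x = cnt x0)
    (fun σ _ => Finset.mem_filter.mpr ⟨Finset.mem_univ _, cnt_comp_perm x0 σ⟩)]
  rw [Finset.sum_congr rfl (fun x hx => card_perm_fiber x0 x (Finset.mem_filter.mp hx).2),
    Finset.sum_const, smul_eq_mul]

end

lemma fact_le_aux (k : ℕ) : ∀ d c, c + d = k → k ! ≤ c ! * k ^ d := by
  intro d
  induction d with
  | zero => intro c h; simp [← h]
  | succ d ih =>
    intro c h
    have h1 : (c + 1) + d = k := by omega
    calc k ! ≤ (c + 1)! * k ^ d := ih _ h1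
      _ = c ! * (c + 1) * k ^ d := by rw [factorial_succ, mul_comm (c+1)]
      _ ≤ c ! * k * k ^ d := by
          have : c + 1 ≤ k := by omega
          exact Nat.mul_le_mul_right _ (Nat.mul_le_mul_left _ this)
      _ = c ! * k ^ (d + 1) := by ring
lemma fact_ge_aux (k : ℕ) : ∀ d, k ! * k ^ (k + d) ≤ (k + d)! * k ^ k := by
  intro d
  induction d with
  | zero => simp
  | succ d ih =>
    calc k ! * k ^ (k + (d+1)) = (k ! * k ^ (k + d)) * k := by ring
      _ ≤ ((k + d)! * k ^ k) * k := Nat.mul_le_mul_right _ ih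
      _ ≤ ((k + d)! * k ^ k) * (k + d + 1) := by gcongr; omega
      _ = (k + (d+1))! * k ^ k := by
          rw [show k + (d+1) = (k+d)+1 by ring, factorial_succ]; ring

lemma factorial_pow_le (k c : ℕ) : k ! * k ^ c ≤ c ! * k ^ k := by
  rcases le_or_gt c k with h | h
  · calc k ! * k ^ c ≤ (c ! * k ^ (k - c)) * k ^ c :=
        Nat.mul_le_mul_right _ (fact_le_aux k (k - c) c (by omega))
      _ = c ! * k ^ k := by rw [mul_assoc, ← pow_add, show k - c + c = k by omega]
  · have := fact_ge_aux k (c - k)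
    rwa [show k + (c - k) = c by omega] at this

section
variable {X : Type*} [Fintype X] [DecidableEq X] {N : ℕ}

lemma own_type_prob (hN : 0 < N) (x0 : Fin N → X) :
    ((((N : ℝ)) + 1) ^ Fintype.card X)⁻¹ ≤
      ((Finset.univ.filter fun x : Fin N → X => cnt x = cnt x0).card : ℝ)
        * ∏ a, ((cnt x0 a : ℝ) / N) ^ cnt x0 a := by
  have hNne : (N : ℝ) ≠ 0 := Nat.cast_ne_zero.mpr hN.ne'
  set Q : X → ℝ := fun a => (cnt x0 a : ℝ) / N with hQdef
  set S : (X → ℕ) → ℝ := fun c =>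
    ((Finset.univ.filter fun x : Fin N → X => cnt x = c).card : ℝ) * ∏ a, Q a ^ c a
    with hSdef
  have hQnn : ∀ a, 0 ≤ Q a := fun a => by simp only [hQdef]; positivity
  have hNQ : ∀ a, Q a * N = cnt x0 a := fun a => by
    simp only [hQdef]; field_simp
  have hQsum : ∑ a, Q a = 1 := by
    simp only [hQdef]
    rw [← Finset.sum_div]
    rw [show ∑ a, ((cnt x0 a : ℝ)) = ((∑ a, cnt x0 a : ℕ) : ℝ) by push_cast; rfl,
      sum_cnt, div_self hNne]
  -- step 1 : total sum is 1, partitioned into fibers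
  have h1 : (1 : ℝ) = ∑ c ∈ Finset.univ.image (cnt (N := N) (X := X)), S c := by
    have e1 : (1 : ℝ) = ∑ x : Fin N → X, ∏ n, Q (x n) := by
      rw [← Fintype.sum_pow Q N, hQsum, one_pow]
    have e2 := Finset.sum_fiberwise_of_maps_to
      (s := (Finset.univ : Finset (Fin N → X)))
      (g := cnt (N := N) (X := X)) (t := Finset.univ.image (cnt (N := N) (X := X)))
      (fun x _ => Finset.mem_image_of_mem _ (mem_univ x))
      (fun x : Fin N → X => ∏ n, Q (x n))
    rw [e1, ← e2]
    refine Finset.sum_congr rfl fun c _ => ?_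
    simp only [hSdef]
    rw [Finset.sum_congr rfl (fun x hx => by
        rw [prod_cnt x Q, (Finset.mem_filter.mp hx).2]),
      Finset.sum_const, nsmul_eq_mul]
  -- step 2 : each fiber has probability at most that of the fiber of x0
  have hmax : ∀ c ∈ Finset.univ.image (cnt (N := N) (X := X)), S c ≤ S (cnt x0) := by
    intro c hc
    obtain ⟨y, -, rfl⟩ := Finset.mem_image.mp hc
    have A : ((Finset.univ.filter fun x : Fin N → X => cnt x = cnt y).card : ℝ)
        * ∏ a, ((cnt y a)! : ℝ) = (N ! : ℝ) := by
      rw [← Nat.cast_prod, ← Nat.cast_mul, card_typeClass y]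
    have B : ((Finset.univ.filter fun x : Fin N → X => cnt x = cnt x0).card : ℝ)
        * ∏ a, ((cnt x0 a)! : ℝ) = (N ! : ℝ) := by
      rw [← Nat.cast_prod, ← Nat.cast_mul, card_typeClass x0]
    -- the per-letter factorial inequality, with the N-power trick
    have hfac : ∀ a : X, ((cnt x0 a)! : ℝ) * Q a ^ cnt y a * (N : ℝ) ^ cnt y a
        ≤ ((cnt y a)! : ℝ) * Q a ^ cnt x0 a * (N : ℝ) ^ cnt x0 a := by
      intro a
      have hqn : ∀ m : ℕ, Q a ^ m * (N : ℝ) ^ m = (cnt x0 a : ℝ) ^ m := fun m => by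
        rw [← mul_pow, hNQ]
      rw [mul_assoc, hqn, mul_assoc, hqn]
      have := factorial_pow_le (cnt x0 a) (cnt y a)
      exact_mod_cast this
    have hprod : (∏ a, ((cnt x0 a)! : ℝ)) * (∏ a, Q a ^ cnt y a)
        ≤ (∏ a, ((cnt y a)! : ℝ)) * (∏ a, Q a ^ cnt x0 a) := by
      have h := Finset.prod_le_prod (s := Finset.univ)
        (f := fun a => ((cnt x0 a)! : ℝ) * Q a ^ cnt y a * (N : ℝ) ^ cnt y a)
        (g := fun a => ((cnt y a)! : ℝ) * Q a ^ cnt x0 a * (N : ℝ) ^ cnt x0 a)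
        (fun a _ => by positivity) (fun a _ => hfac a)
      rw [Finset.prod_mul_distrib, Finset.prod_mul_distrib,
        Finset.prod_mul_distrib, Finset.prod_mul_distrib,
        Finset.prod_pow_eq_pow_sum, Finset.prod_pow_eq_pow_sum,
        sum_cnt, sum_cnt] at h
      have hNN : (0 : ℝ) < (N : ℝ) ^ N := by positivity
      exact le_of_mul_le_mul_right h hNN
    -- combine
    have hpos : (0 : ℝ) < (∏ a, ((cnt y a)! : ℝ)) * ∏ a, ((cnt x0 a)! : ℝ) := by
      apply mul_pos <;> exact Finset.prod_pos fun a _ => by positivity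
    refine le_of_mul_le_mul_right ?_ hpos
    calc S (cnt y) * ((∏ a, ((cnt y a)! : ℝ)) * ∏ a, ((cnt x0 a)! : ℝ))
        = (N ! : ℝ) * ((∏ a, ((cnt x0 a)! : ℝ)) * (∏ a, Q a ^ cnt y a)) := by
          simp only [hSdef]; rw [← A]; ring
      _ ≤ (N ! : ℝ) * ((∏ a, ((cnt y a)! : ℝ)) * (∏ a, Q a ^ cnt x0 a)) := by
          exact mul_le_mul_of_nonneg_left hprod (by positivity)
      _ = S (cnt x0) * ((∏ a, ((cnt y a)! : ℝ)) * ∏ a, ((cnt x0 a)! : ℝ)) := by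
          simp only [hSdef]; rw [← B]; ring
  -- step 3 : at most (N+1)^|X| fibers
  have himage : ((Finset.univ.image (cnt (N := N) (X := X))).card : ℝ)
      ≤ ((N : ℝ) + 1) ^ Fintype.card X := by
    have hn : (Finset.univ.image (cnt (N := N) (X := X))).card
        ≤ (N + 1) ^ Fintype.card X := by
      have := Finset.card_le_card_of_injOn
        (f := fun (c : X → ℕ) (a : X) => (⟨min (c a) N, by omega⟩ : Fin (N + 1)))
        (s := Finset.univ.image (cnt (N := N) (X := X))) (t := Finset.univ)
        (fun c _ => mem_univ _) ?_
      · calc _ ≤ (Finset.univ : Finset (X → Fin (N + 1))).card := this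
          _ = (N + 1) ^ Fintype.card X := by
            rw [Finset.card_univ, Fintype.card_fun, Fintype.card_fin]
      · intro c hc c' hc' h
        obtain ⟨y, -, rfl⟩ := Finset.mem_image.mp hc
        obtain ⟨y', -, rfl⟩ := Finset.mem_image.mp hc'
        funext a
        have h2 := congrFun h a
        simp only [Fin.mk.injEq] at h2
        have l1 := cnt_le y a
        have l2 := cnt_le y' a
        omega
    calc ((Finset.univ.image (cnt (N := N) (X := X))).card : ℝ)
        ≤ (((N + 1) ^ Fintype.card X : ℕ) : ℝ) := Nat.cast_le.mpr hn
      _ = ((N : ℝ) + 1) ^ Fintype.card X := by push_cast; ring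
  -- conclude
  have hSnn : 0 ≤ S (cnt x0) := by
    apply mul_nonneg (Nat.cast_nonneg _)
    exact Finset.prod_nonneg fun a _ => pow_nonneg (hQnn a) _
  have hchain : (1 : ℝ) ≤ (((N : ℝ) + 1) ^ Fintype.card X) * S (cnt x0) := by
    calc (1 : ℝ) = ∑ c ∈ Finset.univ.image (cnt (N := N) (X := X)), S c := h1
      _ ≤ ∑ _c ∈ Finset.univ.image (cnt (N := N) (X := X)), S (cnt x0) :=
          Finset.sum_le_sum hmax
      _ = ((Finset.univ.image (cnt (N := N) (X := X))).card : ℝ) * S (cnt x0) := by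
          rw [Finset.sum_const, nsmul_eq_mul]
      _ ≤ (((N : ℝ) + 1) ^ Fintype.card X) * S (cnt x0) :=
          mul_le_mul_of_nonneg_right himage hSnn
  have hB : (0 : ℝ) < ((N : ℝ) + 1) ^ Fintype.card X := by positivity
  have hgoal : ((((N : ℝ)) + 1) ^ Fintype.card X)⁻¹ ≤ S (cnt x0) := by
    rw [inv_eq_one_div, div_le_iff₀ hB]
    linarith [hchain]
  simpa only [hSdef, hQdef] using hgoal

end

/-- Lower bound for the i.i.d. probability of a type class:
`G^N(T_Q^N) ≥ (N+1)^{-|X|} exp(-N D(Q‖G))`. -/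
theorem prob_type_class_lower (X : Type*) [Fintype X] [DecidableEq X] (N : ℕ) (hN : 0 < N)
    (G : X → ℝ) (hG : IsProb G) (hGpos : ∀ a, 0 < G a)
    (Q : X → ℝ) (hQ : ∃ x : Fin N → X, empDist x = Q) :
    (((N : ℝ) + 1) ^ Fintype.card X)⁻¹ * Real.exp (-(N * dKL Q G))
      ≤ ∑ x ∈ Finset.univ.filter (fun x : Fin N → X => empDist x = Q), ∏ n, G (x n) := by
  obtain ⟨x0, hx0⟩ := hQ
  have hNne : (N : ℝ) ≠ 0 := Nat.cast_ne_zero.mpr hN.ne'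
  have hQdef : ∀ a, Q a = (cnt x0 a : ℝ) / N := fun a => by rw [← hx0]; rfl
  have hNQ : ∀ a, (N : ℝ) * Q a = (cnt x0 a : ℝ) := fun a => by rw [hQdef]; field_simp
  have hQpos : ∀ a, cnt x0 a ≠ 0 → 0 < Q a := fun a h => by
    rw [hQdef]
    apply _root_.div_pos
    · exact_mod_cast Nat.pos_of_ne_zero h
    · exact_mod_cast hN
  have hT : (Finset.univ.filter fun x : Fin N → X => empDist x = Q)
      = Finset.univ.filter fun x : Fin N → X => cnt x = cnt x0 := by
    refine Finset.filter_congr fun x _ => ?_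
    constructor
    · intro h
      funext a
      have h2 : (cnt x a : ℝ) / N = (cnt x0 a : ℝ) / N := by
        rw [← hQdef a]; exact congrFun h a
      field_simp at h2
      exact_mod_cast h2
    · intro h
      funext a
      show (cnt x a : ℝ) / N = Q a
      rw [h, hQdef]
  rw [hT, Finset.sum_congr rfl (fun x hx => by
      rw [prod_cnt x G, (Finset.mem_filter.mp hx).2]),
    Finset.sum_const, nsmul_eq_mul]
  have hexp : Real.exp (-((N : ℝ) * dKL Q G))
      = (∏ a, G a ^ cnt x0 a) / ∏ a, Q a ^ cnt x0 a := by
    have hdk : (N : ℝ) * dKL Q G = ∑ a, (cnt x0 a : ℝ) * Real.log (Q a / G a) := by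
      rw [dKL, Finset.mul_sum]
      exact Finset.sum_congr rfl fun a _ => by rw [← mul_assoc, hNQ]
    rw [hdk, ← Finset.sum_neg_distrib, Real.exp_sum, ← Finset.prod_div_distrib]
    refine Finset.prod_congr rfl fun a _ => ?_
    rcases Nat.eq_zero_or_pos (cnt x0 a) with h | h
    · simp [h]
    · have hQa : 0 < Q a := hQpos a h.ne'
      have hr : 0 < Q a / G a := div_pos hQa (hGpos a)
      rw [show -((cnt x0 a : ℝ) * Real.log (Q a / G a))
          = (cnt x0 a : ℝ) * Real.log ((Q a / G a)⁻¹) by rw [Real.log_inv]; ring]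
      rw [Real.exp_nat_mul, Real.exp_log (inv_pos.mpr hr), inv_div, div_pow]
  rw [hexp]
  have hkey : (((N : ℝ) + 1) ^ Fintype.card X)⁻¹
      ≤ ((Finset.univ.filter fun x : Fin N → X => cnt x = cnt x0).card : ℝ)
        * ∏ a, Q a ^ cnt x0 a := by
    have h := own_type_prob hN x0
    have e : ∏ a, ((cnt x0 a : ℝ) / N) ^ cnt x0 a = ∏ a, Q a ^ cnt x0 a :=
      Finset.prod_congr rfl fun a _ => by rw [hQdef]
    rwa [e] at h
  have hQpp : 0 < ∏ a, Q a ^ cnt x0 a := Finset.prod_pos fun a _ => by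
    rcases Nat.eq_zero_or_pos (cnt x0 a) with h | h
    · simp [h]
    · exact pow_pos (hQpos a h.ne') _
  have hGpp : 0 < ∏ a, G a ^ cnt x0 a := Finset.prod_pos fun a _ => pow_pos (hGpos a) _
  calc (((N : ℝ) + 1) ^ Fintype.card X)⁻¹
        * ((∏ a, G a ^ cnt x0 a) / ∏ a, Q a ^ cnt x0 a)
      ≤ (((Finset.univ.filter fun x : Fin N → X => cnt x = cnt x0).card : ℝ)
          * ∏ a, Q a ^ cnt x0 a)
        * ((∏ a, G a ^ cnt x0 a) / ∏ a, Q a ^ cnt x0 a) :=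
        mul_le_mul_of_nonneg_right hkey (le_of_lt (div_pos hGpp hQpp))
    _ = ((Finset.univ.filter fun x : Fin N → X => cnt x = cnt x0).card : ℝ)
        * ∏ a, G a ^ cnt x0 a := by
        field_simp
end

section
/- Let G_l, G_m be fully supported probability distributions on a finite set X and E > 0. For the acceptance region B_l^N = { x ∈ X^N : D(Q_x‖G_l) ≤ E }, one has G_m^N(B_l^N) ≤ (N+1)^{|X|} · exp(-N · inf{ D(Q‖G_m) : Q a distribution with D(Q‖G_l) ≤ E }). -/
lemma sum_counts {X : Type*} [Fintype X] [DecidableEq X] {N : ℕ} (x : Fin N → X) :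
    ∑ a, (Finset.univ.filter (fun n => x n = a)).card = N := by
  classical
  have := Finset.card_eq_sum_card_fiberwise
    (f := x) (s := Finset.univ) (t := Finset.univ) (fun i _ => Finset.mem_univ _)
  simpa using this.symm

lemma empDist_isProb {X : Type*} [Fintype X] [DecidableEq X] {N : ℕ} (hN : 0 < N)
    (x : Fin N → X) : IsProb (empDist x) := by
  constructor
  · intro a
    exact div_nonneg (Nat.cast_nonneg _) (Nat.cast_nonneg _)
  · have hNne : (N : ℝ) ≠ 0 := by positivity
    rw [show (∑ a, empDist x a) = (∑ a, ((Finset.univ.filter (fun n => x n = a)).card : ℝ)) / N by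
      rw [Finset.sum_div]; rfl]
    rw [div_eq_one_iff_eq hNne]
    norm_cast
    exact sum_counts x

/-- Gibbs' inequality: KL divergence is nonnegative. -/
lemma dKL_nonneg {X : Type*} [Fintype X] {Q G : X → ℝ} (hQ : IsProb Q)
    (hG : IsProb G) (hGpos : ∀ a, 0 < G a) : 0 ≤ dKL Q G := by
  have key : ∑ a, Q a * Real.log (G a / Q a) ≤ 0 := by
    have h1 : ∀ a, Q a * Real.log (G a / Q a) ≤ G a - Q a := by
      intro a
      rcases eq_or_lt_of_le (hQ.1 a) with h0 | hpos
      · rw [← h0]; simp [le_of_lt (hGpos a)]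
      · have hdiv : 0 < G a / Q a := div_pos (hGpos a) hpos
        have := Real.log_le_sub_one_of_pos hdiv
        have h2 : Q a * Real.log (G a / Q a) ≤ Q a * (G a / Q a - 1) :=
          mul_le_mul_of_nonneg_left this (le_of_lt hpos)
        have h3 : Q a * (G a / Q a - 1) = G a - Q a := by field_simp
        linarith
    calc ∑ a, Q a * Real.log (G a / Q a) ≤ ∑ a, (G a - Q a) := Finset.sum_le_sum (fun a _ => h1 a)
      _ = 0 := by rw [Finset.sum_sub_distrib, hG.2, hQ.2, sub_self]
  have heq : dKL Q G = -∑ a, Q a * Real.log (G a / Q a) := by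
    rw [dKL, ← Finset.sum_neg_distrib]
    apply Finset.sum_congr rfl
    intro a _
    rcases eq_or_lt_of_le (hQ.1 a) with h0 | hpos
    · rw [← h0]; ring
    · rw [Real.log_div (ne_of_gt (hGpos a)) (ne_of_gt hpos),
        Real.log_div (ne_of_gt hpos) (ne_of_gt (hGpos a))]
      ring
  rw [heq]
  linarith

/-- Pointwise identity: the product probability in terms of KL from the empirical type. -/
lemma prod_eq_exp {X : Type*} [Fintype X] [DecidableEq X] {N : ℕ} (hN : 0 < N)
    (Gm : X → ℝ) (hGmpos : ∀ a, 0 < Gm a) (x : Fin N → X) :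
    ∏ n, Gm (x n) =
      Real.exp (-(N : ℝ) * dKL (empDist x) Gm) * ∏ n, empDist x (x n) := by
  classical
  set c : X → ℕ := fun a => (Finset.univ.filter (fun n => x n = a)).card with hc
  set Q : X → ℝ := empDist x with hQ
  have hQdef : ∀ a, Q a = (c a : ℝ) / N := fun a => rfl
  have hNne : (N : ℝ) ≠ 0 := by positivity
  have hgroup : ∀ (f : X → ℝ), ∏ n, f (x n) = ∏ a, f a ^ c a := by
    intro f
    rw [← Finset.prod_fiberwise (Finset.univ) x (fun n => f (x n))]
    apply Finset.prod_congr rfl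
    intro a _
    rw [show (∏ n ∈ Finset.univ.filter (fun n => x n = a), f (x n)) =
        ∏ n ∈ Finset.univ.filter (fun n => x n = a), f a from
      Finset.prod_congr rfl (fun n hn => by rw [(Finset.mem_filter.1 hn).2])]
    rw [Finset.prod_const]
  have hterm : ∀ a, Gm a ^ c a =
      Real.exp (-(N : ℝ) * (Q a * Real.log (Q a / Gm a))) * Q a ^ c a := by
    intro a
    rcases Nat.eq_zero_or_pos (c a) with h0 | hpos
    · have hQ0 : Q a = 0 := by rw [hQdef a, h0]; simp
      simp [h0, hQ0]
    · have hQpos : 0 < Q a := by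
        rw [hQdef a]
        have : (0 : ℝ) < (c a : ℝ) := by exact_mod_cast hpos
        positivity
      have hNQ : (N : ℝ) * Q a = (c a : ℝ) := by
        rw [hQdef a]; field_simp
      have hkey : -(N : ℝ) * (Q a * Real.log (Q a / Gm a)) =
          (c a : ℝ) * Real.log (Gm a / Q a) := by
        rw [Real.log_div (ne_of_gt hQpos) (ne_of_gt (hGmpos a)),
          Real.log_div (ne_of_gt (hGmpos a)) (ne_of_gt hQpos), ← hNQ]
        ring
      rw [hkey, Real.exp_nat_mul,
        Real.exp_log (div_pos (hGmpos a) hQpos), div_pow,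
        div_mul_cancel₀ _ (pow_ne_zero _ (ne_of_gt hQpos))]
  rw [hgroup Gm, hgroup Q]
  calc (∏ a, Gm a ^ c a)
      = ∏ a, (Real.exp (-(N : ℝ) * (Q a * Real.log (Q a / Gm a))) * Q a ^ c a) :=
        Finset.prod_congr rfl (fun a _ => hterm a)
    _ = (∏ a, Real.exp (-(N : ℝ) * (Q a * Real.log (Q a / Gm a)))) * ∏ a, Q a ^ c a :=
        Finset.prod_mul_distrib
    _ = Real.exp (-(N : ℝ) * dKL Q Gm) * ∏ a, Q a ^ c a := by
        rw [← Real.exp_sum, dKL, Finset.mul_sum]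

/-- Sum over all sequences of the product of a probability is 1. -/
lemma sum_prod_le_one {X : Type*} [Fintype X] [DecidableEq X] {N : ℕ}
    {Q : X → ℝ} (hQ : IsProb Q) (s : Finset (Fin N → X)) :
    ∑ x ∈ s, ∏ n, Q (x n) ≤ 1 := by
  classical
  have htot : ∑ x : Fin N → X, ∏ n, Q (x n) = 1 := by
    have := Finset.prod_univ_sum (fun _ : Fin N => (Finset.univ : Finset X))
      (fun _ a => Q a)
    rw [Fintype.piFinset_univ] at this
    rw [← this]
    simp [hQ.2]
  have hsub : ∑ x ∈ s, ∏ n, Q (x n) ≤ ∑ x : Fin N → X, ∏ n, Q (x n) :=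
    Finset.sum_le_sum_of_subset_of_nonneg (Finset.subset_univ s)
      (fun x _ _ => Finset.prod_nonneg (fun n _ => hQ.1 (x n)))
  linarith

/-- Upper bound on the probability under `G_m^N` of the acceptance region
`B_l^N = {x : D(Q_x‖G_l) ≤ E}` in terms of the constrained infimum of
divergence. -/
theorem acceptance_prob_upper (X : Type*) [Fintype X] [DecidableEq X]
    (N : ℕ) (hN : 0 < N)
    (Gl Gm : X → ℝ) (hGl : IsProb Gl) (hGlpos : ∀ a, 0 < Gl a)
    (hGm : IsProb Gm) (hGmpos : ∀ a, 0 < Gm a) (E : ℝ) (hE : 0 < E) :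
    ∑ x ∈ Finset.univ.filter (fun x : Fin N → X => dKL (empDist x) Gl ≤ E),
        ∏ n, Gm (x n)
      ≤ ((N : ℝ) + 1) ^ Fintype.card X *
        Real.exp (-(N * sInf {d : ℝ | ∃ Q : X → ℝ, IsProb Q ∧ dKL Q Gl ≤ E ∧ d = dKL Q Gm})) := by
  classical
  set S : Set ℝ := {d : ℝ | ∃ Q : X → ℝ, IsProb Q ∧ dKL Q Gl ≤ E ∧ d = dKL Q Gm} with hSdef
  set I : ℝ := sInf S with hI
  have hbdd : BddBelow S := by
    refine ⟨0, ?_⟩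
    rintro d ⟨Q, hQ, _, rfl⟩
    exact dKL_nonneg hQ hGm hGmpos
  set B : Finset (Fin N → X) :=
    Finset.univ.filter (fun x : Fin N → X => dKL (empDist x) Gl ≤ E) with hB
  set t : (Fin N → X) → (X → ℕ) :=
    fun x a => (Finset.univ.filter (fun n => x n = a)).card with ht
  have hsplit : ∑ x ∈ B, ∏ n, Gm (x n)
      = ∑ c ∈ B.image t, ∑ x ∈ B.filter (fun x => t x = c), ∏ n, Gm (x n) :=
    (Finset.sum_fiberwise_of_maps_to (fun x hx => Finset.mem_image_of_mem t hx) _).symm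
  have hinner : ∀ c ∈ B.image t,
      ∑ x ∈ B.filter (fun x => t x = c), ∏ n, Gm (x n) ≤ Real.exp (-((N : ℝ) * I)) := by
    intro c hc
    obtain ⟨x0, hx0B, hx0c⟩ := Finset.mem_image.1 hc
    have hx0E : dKL (empDist x0) Gl ≤ E := (Finset.mem_filter.1 hx0B).2
    have hQprob : IsProb (empDist x0) := empDist_isProb hN x0
    have hmem : dKL (empDist x0) Gm ∈ S := ⟨empDist x0, hQprob, hx0E, rfl⟩
    have hIle : I ≤ dKL (empDist x0) Gm := csInf_le hbdd hmem
    have hemp : ∀ x ∈ B.filter (fun x => t x = c), empDist x = empDist x0 := by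
      intro x hx
      have htx : t x = t x0 := by rw [(Finset.mem_filter.1 hx).2, hx0c]
      funext a
      show ((t x a : ℝ)) / N = ((t x0 a : ℝ)) / N
      rw [htx]
    calc ∑ x ∈ B.filter (fun x => t x = c), ∏ n, Gm (x n)
        = ∑ x ∈ B.filter (fun x => t x = c),
            Real.exp (-(N : ℝ) * dKL (empDist x0) Gm) * ∏ n, empDist x0 (x n) := by
          apply Finset.sum_congr rfl
          intro x hx
          rw [← hemp x hx, prod_eq_exp hN Gm hGmpos x]
      _ = Real.exp (-(N : ℝ) * dKL (empDist x0) Gm) *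
            ∑ x ∈ B.filter (fun x => t x = c), ∏ n, empDist x0 (x n) := by
          rw [Finset.mul_sum]
      _ ≤ Real.exp (-(N : ℝ) * dKL (empDist x0) Gm) * 1 := by
          apply mul_le_mul_of_nonneg_left (sum_prod_le_one hQprob _) (Real.exp_nonneg _)
      _ = Real.exp (-(N : ℝ) * dKL (empDist x0) Gm) := mul_one _
      _ ≤ Real.exp (-((N : ℝ) * I)) := by
          apply Real.exp_le_exp.2
          have : (N : ℝ) * I ≤ (N : ℝ) * dKL (empDist x0) Gm :=
            mul_le_mul_of_nonneg_left hIle (Nat.cast_nonneg N)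
          linarith
  have hcard : ((B.image t).card : ℝ) ≤ ((N : ℝ) + 1) ^ Fintype.card X := by
    have hle : ∀ c ∈ B.image t, ∀ a, c a ≤ N := by
      intro c hc a
      obtain ⟨x0, _, rfl⟩ := Finset.mem_image.1 hc
      calc t x0 a ≤ (Finset.univ : Finset (Fin N)).card := Finset.card_filter_le _ _
        _ = N := by simp
    set ι : (X → ℕ) → (X → Fin (N + 1)) :=
      fun c a => ⟨min (c a) N, by omega⟩ with hι
    have hinj : Set.InjOn ι (B.image t) := by
      intro c hc c' hc' heq
      funext a
      have h1 : min (c a) N = min (c' a) N := congrArg Fin.val (congrFun heq a)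
      have := hle c hc a
      have := hle c' hc' a
      omega
    have hcard1 : (B.image t).card ≤ (N + 1) ^ Fintype.card X := by
      calc (B.image t).card ≤ (Finset.univ : Finset (X → Fin (N + 1))).card :=
          Finset.card_le_card_of_injOn ι (fun _ _ => Finset.mem_univ _) hinj
        _ = (N + 1) ^ Fintype.card X := by
          rw [Finset.card_univ, Fintype.card_fun]
          simp
    have h4 : ((B.image t).card : ℝ) ≤ (((N + 1) ^ Fintype.card X : ℕ) : ℝ) :=
      Nat.cast_le.2 hcard1
    have h5 : (((N + 1) ^ Fintype.card X : ℕ) : ℝ) = ((N : ℝ) + 1) ^ Fintype.card X := by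
      push_cast; ring
    linarith
  rw [hsplit]
  calc ∑ c ∈ B.image t, ∑ x ∈ B.filter (fun x => t x = c), ∏ n, Gm (x n)
      ≤ ∑ _c ∈ B.image t, Real.exp (-((N : ℝ) * I)) := Finset.sum_le_sum hinner
    _ = ((B.image t).card : ℝ) * Real.exp (-((N : ℝ) * I)) := by
        rw [Finset.sum_const, nsmul_eq_mul]
    _ ≤ ((N : ℝ) + 1) ^ Fintype.card X * Real.exp (-((N : ℝ) * I)) :=
        mul_le_mul_of_nonneg_right hcard (Real.exp_nonneg _)
end

section
/- For independent tests on two objects with M hypotheses each, if the individual error probabilities satisfy α_{l_1|m_1}, α_{l_2|m_2} ∈ (0,1) and the compound error probability is the product α_{l_1,l_2|m_1,m_2}(N) = α_{l_1|m_1}(N)·α_{l_2|m_2}(N) for (l_1,l_2) ≠ (m_1,m_2), while α_{m_1,m_2|m_1,m_2}(N) = ∑_{(l_1,l_2)≠(m_1,m_2)} α_{l_1,l_2|m_1,m_2}(N), then, assuming all individual exponents E_{l|m} = lim_N (-1/N) log α_{l|m}(N) exist and are positive, the compound diagonal exponent satisfies E_{m_1,m_2|m_1,m_2} = min( min_{l_1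 ≠ m_1} E_{l_1|m_1}, min_{l_2 ≠ m_2} E_{l_2|m_2} ). -/
open Filter

lemma exp_add_min {a b : ℕ → ℝ} {ea eb : ℝ} (ha : ∀ N, 0 < a N) (hb : ∀ N, 0 < b N)
    (hta : Tendsto (fun N : ℕ => -(1 / (N : ℝ)) * Real.log (a N)) atTop (nhds ea))
    (htb : Tendsto (fun N : ℕ => -(1 / (N : ℝ)) * Real.log (b N)) atTop (nhds eb)) :
    Tendsto (fun N : ℕ => -(1 / (N : ℝ)) * Real.log (a N + b N)) atTop
      (nhds (min ea eb)) := by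
  have hmin : Tendsto (fun N : ℕ => min (-(1 / (N : ℝ)) * Real.log (a N))
      (-(1 / (N : ℝ)) * Real.log (b N))) atTop (nhds (min ea eb)) := hta.min htb
  have hlog2 : Tendsto (fun N : ℕ => (1 / (N : ℝ)) * Real.log 2) atTop (nhds 0) := by
    simpa using (tendsto_one_div_atTop_nhds_zero_nat.mul_const (Real.log 2))
  have hlo : Tendsto (fun N : ℕ => min (-(1 / (N : ℝ)) * Real.log (a N))
      (-(1 / (N : ℝ)) * Real.log (b N)) - (1 / (N : ℝ)) * Real.log 2) atTop
      (nhds (min ea eb)) := by simpa using hmin.sub hlog2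
  refine tendsto_of_tendsto_of_tendsto_of_le_of_le hlo hmin ?_ ?_
  · intro N
    have hc : (0:ℝ) ≤ 1 / (N : ℝ) := by positivity
    rcases le_total (a N) (b N) with h | h
    · have h1 : a N + b N ≤ 2 * b N := by linarith
      have h2 : Real.log (a N + b N) ≤ Real.log 2 + Real.log (b N) := by
        calc Real.log (a N + b N) ≤ Real.log (2 * b N) :=
              Real.log_le_log (by linarith [ha N, hb N]) h1
          _ = Real.log 2 + Real.log (b N) := Real.log_mul (by norm_num) (hb N).ne'
      have := mul_le_mul_of_nonneg_left h2 hc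
      have hle : -(1 / (N : ℝ)) * Real.log (b N) - (1 / (N : ℝ)) * Real.log 2
          ≤ -(1 / (N : ℝ)) * Real.log (a N + b N) := by nlinarith
      calc min (-(1 / (N : ℝ)) * Real.log (a N)) (-(1 / (N : ℝ)) * Real.log (b N))
            - (1 / (N : ℝ)) * Real.log 2
          ≤ -(1 / (N : ℝ)) * Real.log (b N) - (1 / (N : ℝ)) * Real.log 2 := by
            gcongr; exact min_le_right _ _
        _ ≤ _ := hle
    · have h1 : a N + b N ≤ 2 * a N := by linarith
      have h2 : Real.log (a N + b N) ≤ Real.log 2 + Real.log (a N) := by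
        calc Real.log (a N + b N) ≤ Real.log (2 * a N) :=
              Real.log_le_log (by linarith [ha N, hb N]) h1
          _ = Real.log 2 + Real.log (a N) := Real.log_mul (by norm_num) (ha N).ne'
      have := mul_le_mul_of_nonneg_left h2 hc
      have hle : -(1 / (N : ℝ)) * Real.log (a N) - (1 / (N : ℝ)) * Real.log 2
          ≤ -(1 / (N : ℝ)) * Real.log (a N + b N) := by nlinarith
      calc min (-(1 / (N : ℝ)) * Real.log (a N)) (-(1 / (N : ℝ)) * Real.log (b N))
            - (1 / (N : ℝ)) * Real.log 2
          ≤ -(1 / (N : ℝ)) * Real.log (a N) - (1 / (N : ℝ)) * Real.log 2 := by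
            gcongr; exact min_le_left _ _
        _ ≤ _ := hle
  · intro N
    have hc : (0:ℝ) ≤ 1 / (N : ℝ) := by positivity
    refine le_min ?_ ?_
    · have h2 : Real.log (a N) ≤ Real.log (a N + b N) :=
        Real.log_le_log (ha N) (by linarith [hb N])
      nlinarith [mul_le_mul_of_nonneg_left h2 hc]
    · have h2 : Real.log (b N) ≤ Real.log (a N + b N) :=
        Real.log_le_log (hb N) (by linarith [ha N])
      nlinarith [mul_le_mul_of_nonneg_left h2 hc]

lemma exp_sum_min {ι : Type*} [DecidableEq ι] (s : Finset ι) (hs : s.Nonempty)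
    (a : ι → ℕ → ℝ) (e : ι → ℝ)
    (ha : ∀ i ∈ s, ∀ N, 0 < a i N)
    (ht : ∀ i ∈ s, Tendsto (fun N : ℕ => -(1 / (N : ℝ)) * Real.log (a i N)) atTop
      (nhds (e i))) :
    Tendsto (fun N : ℕ => -(1 / (N : ℝ)) * Real.log (∑ i ∈ s, a i N)) atTop
      (nhds (s.inf' hs e)) := by
  induction hs using Finset.Nonempty.cons_induction with
  | singleton i => simpa using ht i (by simp)
  | cons i s hi hs ih =>
    have h1 : ∀ N, 0 < ∑ j ∈ s, a j N := fun N =>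
      Finset.sum_pos (fun j hj => ha j (Finset.mem_cons_of_mem hj) N) hs
    have h2 := ih (fun j hj => ha j (Finset.mem_cons_of_mem hj))
      (fun j hj => ht j (Finset.mem_cons_of_mem hj))
    have h3 := exp_add_min (fun N => ha i (Finset.mem_cons_self i s) N) h1
      (ht i (Finset.mem_cons_self i s)) h2
    rw [Finset.inf'_cons (H := hs)]
    simpa [Finset.cons_eq_insert, Finset.sum_insert hi] using h3

lemma exp_pos_tendsto_zero {a : ℕ → ℝ} {e : ℝ} (ha : ∀ N, 0 < a N) (he : 0 < e)
    (ht : Tendsto (fun N : ℕ => -(1 / (N : ℝ)) * Real.log (a N)) atTop (nhds e)) :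
    Tendsto a atTop (nhds 0) := by
  have hN : Tendsto (fun N : ℕ => (N : ℝ)) atTop atTop := tendsto_natCast_atTop_atTop
  have hmul : Tendsto (fun N : ℕ => (N : ℝ) * (-(1 / (N : ℝ)) * Real.log (a N)))
      atTop atTop := hN.atTop_mul_pos he ht
  have hlog : Tendsto (fun N : ℕ => Real.log (a N)) atTop atBot := by
    have : Tendsto (fun N : ℕ => -((N : ℝ) * (-(1 / (N : ℝ)) * Real.log (a N))))
        atTop atBot := tendsto_neg_atBot_iff.mpr hmul
    refine Tendsto.congr' ?_ this
    filter_upwards [eventually_ge_atTop 1] with N hN1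
    have hN0 : (N : ℝ) ≠ 0 := by positivity
    field_simp
  have : Tendsto (fun N => Real.exp (Real.log (a N))) atTop (nhds 0) :=
    Real.tendsto_exp_atBot.comp hlog
  refine Tendsto.congr (fun N => ?_) this
  exact Real.exp_log (ha N)

/-- For independent tests on two objects, the diagonal exponent of the
compound test equals the minimum of the two individual worst off-diagonal
exponents (Lemma 4.1 combined with the min-rule). -/
theorem compound_diagonal_exponent (M : ℕ) (hM : 2 ≤ M)
    (α1 α2 : ℕ → Fin M → Fin M → ℝ)
    (hα1 : ∀ N l m, 0 < α1 N l m ∧ α1 N l m < 1)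
    (hα2 : ∀ N l m, 0 < α2 N l m ∧ α2 N l m < 1)
    (E1 E2 : Fin M → Fin M → ℝ)
    (hE1 : ∀ l m, Tendsto (fun N : ℕ => -(1 / (N : ℝ)) * Real.log (α1 N l m))
      atTop (nhds (E1 l m)))
    (hE2 : ∀ l m, Tendsto (fun N : ℕ => -(1 / (N : ℝ)) * Real.log (α2 N l m))
      atTop (nhds (E2 l m)))
    (hE1pos : ∀ l m, 0 < E1 l m) (hE2pos : ∀ l m, 0 < E2 l m)
    (m1 m2 : Fin M)
    (αc : ℕ → Fin M × Fin M → ℝ)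
    (hc1 : ∀ N (l1 l2 : Fin M), l1 ≠ m1 → l2 ≠ m2 →
      αc N (l1, l2) = α1 N l1 m1 * α2 N l2 m2)
    (hc2 : ∀ N (l2 : Fin M), l2 ≠ m2 →
      αc N (m1, l2) = (1 - α1 N m1 m1) * α2 N l2 m2)
    (hc3 : ∀ N (l1 : Fin M), l1 ≠ m1 →
      αc N (l1, m2) = α1 N l1 m1 * (1 - α2 N m2 m2)) :
    limsup (fun N : ℕ => -(1 / (N : ℝ)) *
        Real.log (∑ p ∈ Finset.univ.erase (m1, m2), αc N p)) atTop
      = min (sInf {e : ℝ | ∃ l1, l1 ≠ m1 ∧ e = E1 l1 m1})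
            (sInf {e : ℝ | ∃ l2, l2 ≠ m2 ∧ e = E2 l2 m2}) := by
  haveI : Nontrivial (Fin M) := Fin.nontrivial_iff_two_le.mpr hM
  obtain ⟨l1s, hl1s⟩ := exists_ne m1
  obtain ⟨l2s, hl2s⟩ := exists_ne m2
  set s : Finset (Fin M × Fin M) := Finset.univ.erase (m1, m2) with hs_def
  have hs : s.Nonempty := ⟨(l1s, m2), by simp [hs_def, Prod.ext_iff, hl1s]⟩
  set e : Fin M × Fin M → ℝ := fun p =>
    if p.1 = m1 then E2 p.2 m2 else if p.2 = m2 then E1 p.1 m1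
    else E1 p.1 m1 + E2 p.2 m2 with he_def
  -- positivity of compound errors on s
  have hpos : ∀ p ∈ s, ∀ N, 0 < αc N p := by
    rintro ⟨l1, l2⟩ hp N
    have hne : (l1, l2) ≠ (m1, m2) := Finset.ne_of_mem_erase hp
    have h1 := hα1 N l1 m1; have h2 := hα2 N l2 m2
    have h1d := hα1 N m1 m1; have h2d := hα2 N m2 m2
    by_cases hl1 : l1 = m1
    · subst hl1
      have hl2 : l2 ≠ m2 := by simpa [Prod.ext_iff] using hne
      rw [hc2 N l2 hl2]
      exact mul_pos (by linarith [h1d.2]) h2.1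
    · by_cases hl2 : l2 = m2
      · subst hl2
        rw [hc3 N l1 hl1]
        exact mul_pos h1.1 (by linarith [h2d.2])
      · rw [hc1 N l1 l2 hl1 hl2]
        exact mul_pos h1.1 h2.1
  -- the factors (1 - α_{m|m}) have exponent 0
  have hneginv : Tendsto (fun N : ℕ => -(1 / (N : ℝ))) atTop (nhds 0) := by
    simpa using (tendsto_one_div_atTop_nhds_zero_nat (𝕜 := ℝ)).neg
  have hz1 : Tendsto (fun N : ℕ => -(1 / (N : ℝ)) * Real.log (1 - α1 N m1 m1))
      atTop (nhds 0) := by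
    have ha0 : Tendsto (fun N => α1 N m1 m1) atTop (nhds 0) :=
      exp_pos_tendsto_zero (fun N => (hα1 N m1 m1).1) (hE1pos m1 m1) (hE1 m1 m1)
    have h1 : Tendsto (fun N => 1 - α1 N m1 m1) atTop (nhds 1) := by
      simpa using (tendsto_const_nhds (x := (1:ℝ))).sub ha0
    have hlog : Tendsto (fun N => Real.log (1 - α1 N m1 m1)) atTop (nhds 0) := by
      have := (Real.continuousAt_log one_ne_zero).tendsto.comp h1
      simpa [Function.comp_def] using this
    simpa using hneginv.mul hlog
  have hz2 : Tendsto (fun N : ℕ => -(1 / (N : ℝ)) * Real.log (1 - α2 N m2 m2))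
      atTop (nhds 0) := by
    have ha0 : Tendsto (fun N => α2 N m2 m2) atTop (nhds 0) :=
      exp_pos_tendsto_zero (fun N => (hα2 N m2 m2).1) (hE2pos m2 m2) (hE2 m2 m2)
    have h1 : Tendsto (fun N => 1 - α2 N m2 m2) atTop (nhds 1) := by
      simpa using (tendsto_const_nhds (x := (1:ℝ))).sub ha0
    have hlog : Tendsto (fun N => Real.log (1 - α2 N m2 m2)) atTop (nhds 0) := by
      have := (Real.continuousAt_log one_ne_zero).tendsto.comp h1
      simpa [Function.comp_def] using this
    simpa using hneginv.mul hlog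
  -- per-term exponents
  have hterm : ∀ p ∈ s, Tendsto (fun N : ℕ => -(1 / (N : ℝ)) * Real.log (αc N p))
      atTop (nhds (e p)) := by
    rintro ⟨l1, l2⟩ hp
    have hne : (l1, l2) ≠ (m1, m2) := Finset.ne_of_mem_erase hp
    by_cases hl1 : l1 = m1
    · have hl2 : l2 ≠ m2 := fun h => hne (by rw [hl1, h])
      have key : ∀ N : ℕ, -(1 / (N : ℝ)) * Real.log (αc N (l1, l2)) =
          -(1 / (N : ℝ)) * Real.log (1 - α1 N m1 m1) +
          -(1 / (N : ℝ)) * Real.log (α2 N l2 m2) := by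
        intro N
        rw [hl1, hc2 N l2 hl2,
          Real.log_mul (by linarith [(hα1 N m1 m1).2]) (hα2 N l2 m2).1.ne']
        ring
      have he' : e (l1, l2) = E2 l2 m2 := by simp [he_def, hl1]
      rw [he']
      refine Tendsto.congr (fun N => (key N).symm) ?_
      simpa using hz1.add (hE2 l2 m2)
    · by_cases hl2 : l2 = m2
      · have key : ∀ N : ℕ, -(1 / (N : ℝ)) * Real.log (αc N (l1, l2)) =
            -(1 / (N : ℝ)) * Real.log (α1 N l1 m1) +
            -(1 / (N : ℝ)) * Real.log (1 - α2 N m2 m2) := by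
          intro N
          rw [hl2, hc3 N l1 hl1,
            Real.log_mul (hα1 N l1 m1).1.ne' (by linarith [(hα2 N m2 m2).2])]
          ring
        have he' : e (l1, l2) = E1 l1 m1 := by simp [he_def, hl1, hl2]
        rw [he']
        refine Tendsto.congr (fun N => (key N).symm) ?_
        simpa using (hE1 l1 m1).add hz2
      · have key : ∀ N : ℕ, -(1 / (N : ℝ)) * Real.log (αc N (l1, l2)) =
            -(1 / (N : ℝ)) * Real.log (α1 N l1 m1) +
            -(1 / (N : ℝ)) * Real.log (α2 N l2 m2) := by
          intro N
          rw [hc1 N l1 l2 hl1 hl2, Real.log_mul (hα1 N l1 m1).1.ne' (hα2 N l2 m2).1.ne']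
          ring
        have : e (l1, l2) = E1 l1 m1 + E2 l2 m2 := by simp [he_def, hl1, hl2]
        rw [this]
        exact Tendsto.congr (fun N => (key N).symm) ((hE1 l1 m1).add (hE2 l2 m2))
  have hsum := exp_sum_min s hs (fun p N => αc N p) e hpos hterm
  rw [hsum.limsup_eq]
  -- identify the infima
  set t1 : Finset (Fin M) := Finset.univ.erase m1 with ht1_def
  set t2 : Finset (Fin M) := Finset.univ.erase m2 with ht2_def
  have ht1 : t1.Nonempty := ⟨l1s, by simp [ht1_def, hl1s]⟩
  have ht2 : t2.Nonempty := ⟨l2s, by simp [ht2_def, hl2s]⟩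
  have hA : sInf {x : ℝ | ∃ l1, l1 ≠ m1 ∧ x = E1 l1 m1} =
      t1.inf' ht1 (fun l1 => E1 l1 m1) := by
    rw [Finset.inf'_eq_csInf_image]
    congr 1
    ext x
    simp only [Set.mem_setOf_eq, Set.mem_image, Finset.mem_coe, Finset.mem_erase,
      Finset.mem_univ, and_true, ht1_def]
    exact ⟨fun ⟨l, h, hx⟩ => ⟨l, h, hx.symm⟩, fun ⟨l, h, hx⟩ => ⟨l, h, hx.symm⟩⟩
  have hB : sInf {x : ℝ | ∃ l2, l2 ≠ m2 ∧ x = E2 l2 m2} =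
      t2.inf' ht2 (fun l2 => E2 l2 m2) := by
    rw [Finset.inf'_eq_csInf_image]
    congr 1
    ext x
    simp only [Set.mem_setOf_eq, Set.mem_image, Finset.mem_coe, Finset.mem_erase,
      Finset.mem_univ, and_true, ht2_def]
    exact ⟨fun ⟨l, h, hx⟩ => ⟨l, h, hx.symm⟩, fun ⟨l, h, hx⟩ => ⟨l, h, hx.symm⟩⟩
  rw [hA, hB]
  apply le_antisymm
  · apply le_min
    · apply Finset.le_inf'
      intro l1 hl1
      have hl1' : l1 ≠ m1 := Finset.ne_of_mem_erase hl1
      have hmem : (l1, m2) ∈ s := by simp [hs_def, Prod.ext_iff, hl1']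
      have : e (l1, m2) = E1 l1 m1 := by simp [he_def, hl1']
      calc s.inf' hs e ≤ e (l1, m2) := Finset.inf'_le _ hmem
        _ = E1 l1 m1 := this
    · apply Finset.le_inf'
      intro l2 hl2
      have hl2' : l2 ≠ m2 := Finset.ne_of_mem_erase hl2
      have hmem : (m1, l2) ∈ s := by simp [hs_def, Prod.ext_iff, hl2']
      have : e (m1, l2) = E2 l2 m2 := by simp [he_def]
      calc s.inf' hs e ≤ e (m1, l2) := Finset.inf'_le _ hmem
        _ = E2 l2 m2 := this
  · apply Finset.le_inf'
    rintro ⟨l1, l2⟩ hp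
    have hne : (l1, l2) ≠ (m1, m2) := Finset.ne_of_mem_erase hp
    by_cases hl1 : l1 = m1
    · have hl2 : l2 ≠ m2 := fun h => hne (by rw [hl1, h])
      have he' : e (l1, l2) = E2 l2 m2 := by simp [he_def, hl1]
      rw [he']
      exact min_le_of_right_le (Finset.inf'_le _ (by simp [ht2_def, hl2]))
    · by_cases hl2 : l2 = m2
      · have he' : e (l1, l2) = E1 l1 m1 := by simp [he_def, hl1, hl2]
        rw [he']
        exact min_le_of_left_le (Finset.inf'_le _ (by simp [ht1_def, hl1]))
      · have he' : e (l1, l2) = E1 l1 m1 + E2 l2 m2 := by simp [he_def, hl1, hl2]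
        rw [he']
        have : t1.inf' ht1 (fun l => E1 l m1) ≤ E1 l1 m1 :=
          Finset.inf'_le _ (by simp [ht1_def, hl1])
        have h2 := hE2pos l2 m2
        exact min_le_of_left_le (by linarith)
end
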